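/- Let p*, p, q be three pairwise distinct points in the Euclidean plane ℝ², let δ = ‖p − p*‖, let α be the (unoriented) angle between the vectors p − p* and q − p*, and let α' be the (unoriented) angle between the vectors p − p* and q − p. Then α' ≥ α and sin(α' − α) = δ sin(α) / ‖q − p‖. -/

import Mathlib

open InnerProductGeometry Real

/-- Let `pstar`, `p`, `q` be pairwise distinct points in the Euclidean plane,
`δ = ‖p - pstar‖`, `α` the unoriented angle between `p - pstar` and `q - pstar`, and `α'` the
unoriented angle between `p - pstar` and `q - p`. Then `α' ≥ α` and
`sin (α' - α) = δ sin α / ‖q - p‖`. -/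
theorem angle_shift_identity (pstar p q : EuclideanSpace ℝ (Fin 2))
    (h₁ : pstar ≠ p) (h₂ : pstar ≠ q) (h₃ : p ≠ q) :
    angle (p - pstar) (q - pstar) ≤ angle (p - pstar) (q - p) ∧
    Real.sin (angle (p - pstar) (q - p) - angle (p - pstar) (q - pstar)) =
      ‖p - pstar‖ * Real.sin (angle (p - pstar) (q - pstar)) / ‖q - p‖ := by
  set u := p - pstar with hu
  set v := q - pstar with hv
  set w := q - p with hw
  have hu0 : u ≠ 0 := sub_ne_zero.2 (Ne.symm h₁)
  have hv0 : v ≠ 0 := sub_ne_zero.2 (Ne.symm h₂)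
  have hw0 : w ≠ 0 := sub_ne_zero.2 (Ne.symm h₃)
  have huv : u - v = -w := by rw [hu, hv, hw]; abel
  have hvu : v - u = w := by rw [hu, hv, hw]; abel
  have hpi := angle_add_angle_sub_add_angle_sub_eq_pi u hv0
  rw [huv, hvu, angle_neg_right] at hpi
  -- hpi : angle u v + (π - angle u w) + angle v w = π
  have hkey : angle u w = angle u v + angle v w := by linarith
  have hrw : angle u w - angle u v = angle v w := by linarith
  constructor
  · rw [hkey]; linarith [angle_nonneg v w]
  · rw [hrw]
    -- law of sines: sin (angle v w) * (‖v‖ * ‖w‖) = sin (angle u v) * (‖u‖ * ‖v‖)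
    have h1 := sin_angle_mul_norm_mul_norm v w
    have h2 := sin_angle_mul_norm_mul_norm u v
    have hsame : inner ℝ v v * inner ℝ w w - inner ℝ v w * inner ℝ v w
        = inner ℝ u u * inner ℝ v v - (inner ℝ u v : ℝ) * inner ℝ u v := by
      rw [← hvu]
      simp only [inner_sub_left, inner_sub_right, real_inner_comm u v]
      ring
    rw [hsame] at h1
    rw [← h2] at h1
    have hwn : ‖w‖ ≠ 0 := norm_ne_zero_iff.2 hw0
    have hvn : ‖v‖ ≠ 0 := norm_ne_zero_iff.2 hv0
    have hcancel : Real.sin (angle v w) * ‖w‖ = Real.sin (angle u v) * ‖u‖ := by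
      apply mul_right_cancel₀ hvn
      calc Real.sin (angle v w) * ‖w‖ * ‖v‖ = Real.sin (angle v w) * (‖v‖ * ‖w‖) := by ring
        _ = Real.sin (angle u v) * (‖u‖ * ‖v‖) := h1
        _ = Real.sin (angle u v) * ‖u‖ * ‖v‖ := by ring
    field_simp
    linarith [hcancel]
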